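/- Fix a prime p and a natural number m, and for j ∈ ℕ write q_j := ⌊j / p^m⌋. In ℚ_p[X] set binom(X,k) := X(X−1)⋯(X−k+1)/k!. Then the ℤ_p-submodule of ℚ_p[X] spanned by the elements q_k!·binom(X,k) for k ∈ ℕ is a ℤ_p-subalgebra of ℚ_p[X]. -/

import Mathlib

open Finset Nat Polynomial

private theorem natB (i j t : ℕ) :
    i.choose (t+1) * (j+1).choose (t+1) * (t+1).factorial
      = i.choose (t+1) * j.choose (t+1) * (t+1).factorial
        + i.choose t * j.choose t * t.factorial * (i - t) := by
  have h1 : i.choose (t+1) * (t+1).factorial = i.choose t * t.factorial * (i - t) := by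
    rw [Nat.factorial_succ, show i.choose (t+1) * ((t+1) * t.factorial)
        = (i.choose (t+1) * (t+1)) * t.factorial by ring, Nat.choose_succ_right_eq]
    ring
  rw [Nat.choose_succ_succ j t]
  calc i.choose (t+1) * (j.choose t + j.choose (t+1)) * (t+1).factorial
      = i.choose (t+1) * j.choose (t+1) * (t+1).factorial
        + (i.choose (t+1) * (t+1).factorial) * j.choose t := by ring
    _ = _ := by rw [h1]; ring


private theorem natA {i j t : ℕ} (hti : t ≤ i) (htj : t ≤ j) :
    (i + j - t).choose i * (i.factorial * j.factorial)
      = j.choose t * (t.factorial * (i + j - t).factorial) := by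
  have hik : i ≤ i + j - t := by omega
  have h1 : (i + j - t).choose i * i.factorial * (i + j - t - i).factorial
      = (i + j - t).factorial := Nat.choose_mul_factorial_mul_factorial hik
  have h2 : j.choose t * t.factorial * (j - t).factorial = j.factorial :=
    Nat.choose_mul_factorial_mul_factorial htj
  have h3 : i + j - t - i = j - t := by omega
  rw [h3] at h1
  apply Nat.eq_of_mul_eq_mul_right (Nat.factorial_pos (j - t))
  calc (i + j - t).choose i * (i.factorial * j.factorial) * (j - t).factorial
      = ((i + j - t).choose i * i.factorial * (j-t).factorial) * j.factorial := by ring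
    _ = (i + j - t).factorial * j.factorial := by rw [h1]
    _ = (j.choose t * t.factorial * (j-t).factorial) * (i+j-t).factorial := by rw [h2]; ring
    _ = _ := by ring

private theorem descmul {R : Type*} [CommRing R] (i j : ℕ) :
    descPochhammer R i * descPochhammer R j
      = ∑ t ∈ range (i+1),
          ((i.choose t * j.choose t * t.factorial : ℕ) : R[X]) * descPochhammer R (i + j - t) := by
  induction j with
  | zero =>
    rw [descPochhammer_zero, mul_one, Finset.sum_eq_single 0]
    · simp
    · intro t ht htne
      obtain ⟨s, rfl⟩ := Nat.exists_eq_succ_of_ne_zero htne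
      simp [Nat.choose_zero_succ]
    · simp
  | succ j ih =>
    rw [descPochhammer_succ_right, ← mul_assoc, ih, Finset.sum_mul]
    have step : ∀ t ∈ range (i+1),
        ((i.choose t * j.choose t * t.factorial : ℕ) : R[X]) * descPochhammer R (i+j-t)
            * (X - (j : R[X]))
        = ((i.choose t * j.choose t * t.factorial : ℕ) : R[X]) * descPochhammer R (i+j-t+1)
          + ((i.choose t * j.choose t * t.factorial * (i - t) : ℕ) : R[X])
              * descPochhammer R (i+j-t) := by
      intro t ht
      have htle : t ≤ i := Nat.lt_succ_iff.mp (mem_range.mp ht)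
      have hc : (X - (j:R[X])) = (X - ((i+j-t : ℕ) : R[X])) + ((i - t : ℕ) : R[X]) := by
        have h1 : ((i+j-t:ℕ) : R[X]) = (i:R[X]) + (j:R[X]) - (t:R[X]) := by
          rw [Nat.cast_sub (by omega)]; push_cast; ring
        have h2 : ((i-t:ℕ) : R[X]) = (i:R[X]) - (t:R[X]) := by
          rw [Nat.cast_sub htle]
        rw [h1, h2]; ring
      rw [mul_assoc, hc, mul_add, ← descPochhammer_succ_right]
      push_cast
      ring
    rw [Finset.sum_congr rfl step, Finset.sum_add_distrib]
    -- reindex the two sums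
    have e1 : ∑ t ∈ range (i+1),
        ((i.choose t * j.choose t * t.factorial : ℕ) : R[X]) * descPochhammer R (i+j-t+1)
      = ((i.choose 0 * j.choose 0 * Nat.factorial 0 : ℕ) : R[X]) * descPochhammer R (i+j+1)
        + ∑ t ∈ range i,
          ((i.choose (t+1) * j.choose (t+1) * (t+1).factorial : ℕ) : R[X])
            * descPochhammer R (i+j-t) := by
      rw [Finset.sum_range_succ']
      have hs : ∀ t ∈ range i,
          ((i.choose (t+1) * j.choose (t+1) * (t+1).factorial : ℕ) : R[X])
            * descPochhammer R (i+j-(t+1)+1)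
          = ((i.choose (t+1) * j.choose (t+1) * (t+1).factorial : ℕ) : R[X])
            * descPochhammer R (i+j-t) := by
        intro t ht
        have : i + j - (t+1) + 1 = i + j - t := by
          have := mem_range.mp ht; omega
        rw [this]
      rw [Finset.sum_congr rfl hs, add_comm]
      congr 2
    have e2 : ∑ t ∈ range (i+1),
        ((i.choose t * j.choose t * t.factorial * (i - t) : ℕ) : R[X]) * descPochhammer R (i+j-t)
      = ∑ t ∈ range i,
          ((i.choose t * j.choose t * t.factorial * (i - t) : ℕ) : R[X])
            * descPochhammer R (i+j-t) := by
      rw [Finset.sum_range_succ, Nat.sub_self]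
      simp
    have e3 : ∑ t ∈ range (i+1),
        ((i.choose t * (j+1).choose t * t.factorial : ℕ) : R[X]) * descPochhammer R (i+(j+1)-t)
      = ((i.choose 0 * (j+1).choose 0 * Nat.factorial 0 : ℕ) : R[X]) * descPochhammer R (i+j+1)
        + ∑ t ∈ range i,
          ((i.choose (t+1) * (j+1).choose (t+1) * (t+1).factorial : ℕ) : R[X])
            * descPochhammer R (i+j-t) := by
      rw [Finset.sum_range_succ']
      have hs : ∀ t ∈ range i,
          ((i.choose (t+1) * (j+1).choose (t+1) * (t+1).factorial : ℕ) : R[X])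
            * descPochhammer R (i+(j+1)-(t+1))
          = ((i.choose (t+1) * (j+1).choose (t+1) * (t+1).factorial : ℕ) : R[X])
            * descPochhammer R (i+j-t) := by
        intro t ht
        have : i + (j+1) - (t+1) = i + j - t := by omega
        rw [this]
      rw [Finset.sum_congr rfl hs, add_comm]
      congr 2
    rw [e1, e2, e3, add_assoc, ← Finset.sum_add_distrib]
    congr 1
    · simp
    refine Finset.sum_congr rfl fun t ht => ?_
    rw [← add_mul, ← Nat.cast_add, ← natB]

private theorem legendre (p : ℕ) [hp : Fact p.Prime] (m a b : ℕ) :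
    padicValNat p (((a+b)/p^m).factorial)
      ≤ padicValNat p ((a/p^m).factorial) + padicValNat p ((b/p^m).factorial)
        + padicValNat p ((a+b).choose a) := by
  have hple : 2 ≤ p := hp.out.two_le
  -- Legendre for the quotient factorials
  have hqf : ∀ n, n ≤ a + b →
      padicValNat p ((n/p^m).factorial) = ∑ i ∈ Ico 1 (a+b+1), n / p^(m+i) := by
    intro n hn
    rw [padicValNat_factorial (b := (a+b+1))
      (lt_of_le_of_lt (Nat.log_le_self _ _)
        (Nat.lt_succ_of_le (le_trans (Nat.div_le_self _ _) hn)))]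
    refine Finset.sum_congr rfl fun i _ => ?_
    rw [Nat.div_div_eq_div_mul, ← pow_add]
  have hf : ∀ n, n ≤ a + b →
      padicValNat p (n.factorial)
        = (∑ i ∈ Ico 1 (1+m), n / p^i) + ∑ i ∈ Ico 1 (a+b+1), n / p^(m+i) := by
    intro n hn
    rw [padicValNat_factorial (b := m + (a+b+1))
      (lt_of_le_of_lt (Nat.log_le_self p n) (by omega))]
    rw [← Finset.sum_Ico_consecutive (fun i => n / p^i) (by omega : 1 ≤ 1+m)
      (by omega : 1+m ≤ m+(a+b+1))]
    congr 1
    rw [Finset.sum_Ico_add (fun i => n / p^i) 1 (a+b+1) m]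
    rw [Nat.add_comm m (a+b+1)]
  -- multiplicativity for the choose
  have hcm : padicValNat p ((a+b).factorial)
      = padicValNat p ((a+b).choose a) + padicValNat p (a.factorial)
        + padicValNat p (b.factorial) := by
    have h := Nat.add_choose_mul_factorial_mul_factorial a b
    have hc0 : (a+b).choose a ≠ 0 := (Nat.choose_pos (Nat.le_add_right a b)).ne'
    have h2 : padicValNat p ((a+b).choose a * a.factorial * b.factorial)
        = padicValNat p ((a+b).choose a) + padicValNat p (a.factorial)
          + padicValNat p (b.factorial) := by
      rw [padicValNat.mul (Nat.mul_ne_zero hc0 (Nat.factorial_ne_zero a))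
        (Nat.factorial_ne_zero b),
        padicValNat.mul hc0 (Nat.factorial_ne_zero a)]
    rw [← Nat.choose_symm_add] at h
    rw [← h, h2]
  -- the head-sum inequality
  have hhead : (∑ i ∈ Ico 1 (1+m), a / p^i) + (∑ i ∈ Ico 1 (1+m), b / p^i)
      ≤ ∑ i ∈ Ico 1 (1+m), (a+b) / p^i := by
    rw [← Finset.sum_add_distrib]
    exact Finset.sum_le_sum fun i _ => Nat.add_div_le_add_div a b (p^i)
  -- the tail-sum inequality (q parts)
  have htail : ∀ n₁ n₂, n₁ ≤ n₂ → (∑ i ∈ Ico 1 (a+b+1), n₁ / p^(m+i)) ≤ ∑ i ∈ Ico 1 (a+b+1), n₂ / p^(m+i) :=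
    fun n₁ n₂ h => Finset.sum_le_sum fun i _ => Nat.div_le_div_right h
  have key : padicValNat p (((a+b)/p^m).factorial) + padicValNat p (a.factorial)
      + padicValNat p (b.factorial)
      ≤ padicValNat p ((a/p^m).factorial) + padicValNat p ((b/p^m).factorial)
        + padicValNat p ((a+b).factorial) := by
    rw [hqf (a+b) (le_refl _), hqf a (by omega), hqf b (by omega),
      hf a (by omega), hf b (by omega), hf (a+b) (le_refl _)]
    omega
  omega

private theorem val_le (p : ℕ) [hp : Fact p.Prime] (m i j t : ℕ) (hti : t ≤ i) (htj : t ≤ j) :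
    padicValNat p (((i+j-t)/p^m).factorial)
      ≤ padicValNat p ((i+j-t).choose i
          * (i.choose t * ((i/p^m).factorial * (j/p^m).factorial))) := by
  have hk : i + j - t = i + (j - t) := by omega
  have h1 := legendre p m i (j-t)
  rw [← hk] at h1
  have h2 : padicValNat p (((j-t)/p^m).factorial) ≤ padicValNat p ((j/p^m).factorial) := by
    rw [← padicValNat_dvd_iff_le (Nat.factorial_ne_zero _)]
    exact dvd_trans pow_padicValNat_dvd
      (Nat.factorial_dvd_factorial (Nat.div_le_div_right (by omega)))
  have hc0 : (i+j-t).choose i ≠ 0 := (Nat.choose_pos (by omega)).ne'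
  have hct0 : i.choose t ≠ 0 := (Nat.choose_pos hti).ne'
  rw [padicValNat.mul hc0 (Nat.mul_ne_zero hct0
      (Nat.mul_ne_zero (Nat.factorial_ne_zero _) (Nat.factorial_ne_zero _))),
    padicValNat.mul hct0 (Nat.mul_ne_zero (Nat.factorial_ne_zero _) (Nat.factorial_ne_zero _)),
    padicValNat.mul (Nat.factorial_ne_zero _) (Nat.factorial_ne_zero _)]
  omega


private theorem norm_le_one (p : ℕ) [hp : Fact p.Prime] (m i j t : ℕ)
    (hti : t ≤ i) (htj : t ≤ j) :
    ‖(((i/p^m).factorial : ℚ_[p]) / (i.factorial : ℚ_[p]))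
      * ((((j/p^m).factorial : ℚ_[p]) / (j.factorial : ℚ_[p]))
      * (((i.choose t * j.choose t * t.factorial : ℕ) : ℚ_[p])
      * (((i+j-t).factorial : ℚ_[p]) / ((((i+j-t)/p^m).factorial : ℚ_[p])))))‖ ≤ 1 := by
  set k := i + j - t with hkdef
  set N : ℕ := k.choose i * (i.choose t * ((i/p^m).factorial * (j/p^m).factorial)) with hNdef
  set v : ℕ := padicValNat p ((k/p^m).factorial) with hvdef
  have hN0 : N ≠ 0 := by
    refine Nat.mul_ne_zero ((Nat.choose_pos (by omega)).ne') (Nat.mul_ne_zero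
      ((Nat.choose_pos hti).ne') (Nat.mul_ne_zero (factorial_ne_zero _) (factorial_ne_zero _)))
  have hdvd : p ^ v ∣ N := (padicValNat_dvd_iff_le hN0).mpr (val_le p m i j t hti htj)
  set N' : ℕ := N / p ^ v with hN'def
  set r : ℕ := (k/p^m).factorial / p ^ v with hrdef
  have hN : p ^ v * N' = N := Nat.mul_div_cancel' hdvd
  have hq : p ^ v * r = (k/p^m).factorial := Nat.mul_div_cancel' pow_padicValNat_dvd
  have hr0 : r ≠ 0 := by
    intro h; rw [h, Nat.mul_zero] at hq; exact (factorial_ne_zero _) hq.symm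
  have hrp : ¬ p ∣ r := by
    have := Nat.not_dvd_ordCompl hp.out (Nat.factorial_ne_zero (k/p^m))
    rwa [Nat.factorization_def _ hp.out, ← hvdef, ← hrdef] at this
  -- the nat identity
  have natEq : (i/p^m).factorial * (j/p^m).factorial
        * (i.choose t * j.choose t * t.factorial) * k.factorial * r
      = N' * (i.factorial * (j.factorial * (k/p^m).factorial)) := by
    have hA : k.choose i * (i.factorial * j.factorial)
        = j.choose t * (t.factorial * k.factorial) := natA hti htj
    have e1 : N * (i.factorial * j.factorial)
        = (i/p^m).factorial * (j/p^m).factorial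
          * (i.choose t * j.choose t * t.factorial) * k.factorial := by
      calc N * (i.factorial * j.factorial)
          = (i.choose t * ((i/p^m).factorial * (j/p^m).factorial))
            * (k.choose i * (i.factorial * j.factorial)) := by rw [hNdef]; ring
        _ = (i.choose t * ((i/p^m).factorial * (j/p^m).factorial))
            * (j.choose t * (t.factorial * k.factorial)) := by rw [hA]
        _ = _ := by ring
    calc (i/p^m).factorial * (j/p^m).factorial
          * (i.choose t * j.choose t * t.factorial) * k.factorial * r
        = N * (i.factorial * j.factorial) * r := by rw [e1]
      _ = (p^v * N') * (i.factorial * j.factorial) * r := by rw [hN]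
      _ = N' * (i.factorial * (j.factorial * (p^v * r))) := by ring
      _ = _ := by rw [hq]
  -- express the scalar as N'/r
  have hi0 : (i.factorial : ℚ_[p]) ≠ 0 := Nat.cast_ne_zero.mpr (factorial_ne_zero _)
  have hj0 : (j.factorial : ℚ_[p]) ≠ 0 := Nat.cast_ne_zero.mpr (factorial_ne_zero _)
  have hqk0 : (((k/p^m).factorial : ℕ) : ℚ_[p]) ≠ 0 := Nat.cast_ne_zero.mpr (factorial_ne_zero _)
  have hr0' : ((r : ℕ) : ℚ_[p]) ≠ 0 := Nat.cast_ne_zero.mpr hr0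
  have heq : (((i/p^m).factorial : ℚ_[p]) / (i.factorial : ℚ_[p]))
      * ((((j/p^m).factorial : ℚ_[p]) / (j.factorial : ℚ_[p]))
      * (((i.choose t * j.choose t * t.factorial : ℕ) : ℚ_[p])
      * ((k.factorial : ℚ_[p]) / ((((k/p^m).factorial : ℚ_[p]))))))
      = (N' : ℚ_[p]) / (r : ℚ_[p]) := by
    have h := congrArg (fun x : ℕ => (x : ℚ_[p])) natEq
    push_cast at h
    field_simp
    push_cast
    linear_combination h
  rw [heq]
  have hnr : ‖((r : ℕ) : ℚ_[p])‖ = 1 := by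
    have hle : ‖((r : ℕ) : ℚ_[p])‖ ≤ 1 := by
      have := Padic.norm_int_le_one (p := p) (r : ℤ)
      push_cast at this ⊢; exact this
    have hlt : ¬ ‖((r : ℕ) : ℚ_[p])‖ < 1 := by
      intro hlt
      have : (p : ℤ) ∣ (r : ℤ) := by
        rw [← Padic.norm_intCast_lt_one_iff]
        push_cast; exact_mod_cast hlt
      exact hrp (Int.natCast_dvd_natCast.mp this)
    exact le_antisymm hle (not_lt.mp hlt)
  rw [norm_div, hnr, div_one]
  have := Padic.norm_int_le_one (p := p) (N' : ℤ)
  push_cast at this ⊢; exact this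


private theorem mem_one (p : ℕ) [Fact p.Prime] (m : ℕ) :
    (1 : Polynomial ℚ_[p]) ∈
      Submodule.span ℤ_[p]
        (Set.range fun k : ℕ =>
          ((Nat.factorial (k / p ^ m) : ℚ_[p]) / (Nat.factorial k : ℚ_[p])) •
            descPochhammer ℚ_[p] k) := by
  have h : ((Nat.factorial (0 / p ^ m) : ℚ_[p]) / (Nat.factorial 0 : ℚ_[p])) •
      descPochhammer ℚ_[p] 0 = 1 := by
    simp [descPochhammer_zero]
  exact h ▸ Submodule.subset_span (Set.mem_range_self 0)

private theorem smul_mem_span (p : ℕ) [Fact p.Prime] {S : Set (Polynomial ℚ_[p])}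
    {a : ℚ_[p]} (ha : ‖a‖ ≤ 1) {v : Polynomial ℚ_[p]} (hv : v ∈ Submodule.span ℤ_[p] S) :
    a • v ∈ Submodule.span ℤ_[p] S := by
  set z : ℤ_[p] := ⟨a, ha⟩ with hz
  have h : a • v = z • v := by
    rw [← algebraMap_smul (R := ℤ_[p]) ℚ_[p] z v, PadicInt.algebraMap_apply]
  rw [h]
  exact Submodule.smul_mem _ _ hv

private theorem gen_mul_mem (p : ℕ) [hp : Fact p.Prime] (m i j : ℕ) :
    (((Nat.factorial (i / p ^ m) : ℚ_[p]) / (Nat.factorial i : ℚ_[p])) •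
        descPochhammer ℚ_[p] i) *
      (((Nat.factorial (j / p ^ m) : ℚ_[p]) / (Nat.factorial j : ℚ_[p])) •
        descPochhammer ℚ_[p] j) ∈
      Submodule.span ℤ_[p]
        (Set.range fun k : ℕ =>
          ((Nat.factorial (k / p ^ m) : ℚ_[p]) / (Nat.factorial k : ℚ_[p])) •
            descPochhammer ℚ_[p] k) := by
  rw [smul_mul_smul_comm, descmul, Finset.smul_sum]
  refine Submodule.sum_mem _ fun t ht => ?_
  have hti : t ≤ i := Nat.lt_succ_iff.mp (Finset.mem_range.mp ht)
  rcases le_or_gt t j with htj | hjt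
  · -- the term is a bounded scalar times a generator
    set k := i + j - t with hk
    set a : ℚ_[p] := ((Nat.factorial (i / p ^ m) : ℚ_[p]) / (Nat.factorial i : ℚ_[p]))
      * (((Nat.factorial (j / p ^ m) : ℚ_[p]) / (Nat.factorial j : ℚ_[p]))
      * (((i.choose t * j.choose t * t.factorial : ℕ) : ℚ_[p])
      * ((k.factorial : ℚ_[p]) / ((Nat.factorial (k / p ^ m) : ℚ_[p]))))) with hadef
    have hterm : ((Nat.factorial (i / p ^ m) : ℚ_[p]) / (Nat.factorial i : ℚ_[p])
          * ((Nat.factorial (j / p ^ m) : ℚ_[p]) / (Nat.factorial j : ℚ_[p]))) •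
          (((i.choose t * j.choose t * t.factorial : ℕ) : Polynomial ℚ_[p])
            * descPochhammer ℚ_[p] (i + j - t))
        = a • (((Nat.factorial (k / p ^ m) : ℚ_[p]) / (Nat.factorial k : ℚ_[p])) •
            descPochhammer ℚ_[p] k) := by
      rw [← Polynomial.C_eq_natCast, ← Polynomial.smul_eq_C_mul, smul_smul, smul_smul, ← hk]
      congr 1
      have hk0 : (k.factorial : ℚ_[p]) ≠ 0 := Nat.cast_ne_zero.mpr (Nat.factorial_ne_zero _)
      have hqk0 : ((Nat.factorial (k / p ^ m) : ℕ) : ℚ_[p]) ≠ 0 :=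
        Nat.cast_ne_zero.mpr (Nat.factorial_ne_zero _)
      rw [hadef]
      have h1 : (↑k ! : ℚ_[p]) * ↑(k / p ^ m)! * (↑k !)⁻¹ * (↑(k / p ^ m)!)⁻¹ = 1 := by
        field_simp
      field_simp
    rw [hterm]
    exact smul_mem_span p (norm_le_one p m i j t hti htj) 
      (Submodule.subset_span (Set.mem_range_self k))
  · -- the coefficient vanishes
    have : j.choose t = 0 := Nat.choose_eq_zero_of_lt hjt
    simp [this]

theorem stmt_6 (p : ℕ) [Fact p.Prime] (m : ℕ) :
    (1 : Polynomial ℚ_[p]) ∈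
        Submodule.span ℤ_[p]
          (Set.range fun k : ℕ =>
            ((Nat.factorial (k / p ^ m) : ℚ_[p]) / (Nat.factorial k : ℚ_[p])) •
              descPochhammer ℚ_[p] k) ∧
    ∀ x y : Polynomial ℚ_[p],
      x ∈ Submodule.span ℤ_[p]
            (Set.range fun k : ℕ =>
              ((Nat.factorial (k / p ^ m) : ℚ_[p]) / (Nat.factorial k : ℚ_[p])) •
                descPochhammer ℚ_[p] k) →
      y ∈ Submodule.span ℤ_[p]
            (Set.range fun k : ℕ =>
              ((Nat.factorial (k / p ^ m) : ℚ_[p]) / (Nat.factorial k : ℚ_[p])) •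
                descPochhammer ℚ_[p] k) →
      x * y ∈ Submodule.span ℤ_[p]
            (Set.range fun k : ℕ =>
              ((Nat.factorial (k / p ^ m) : ℚ_[p]) / (Nat.factorial k : ℚ_[p])) •
                descPochhammer ℚ_[p] k) := by
  refine ⟨mem_one p m, fun x y hx hy => ?_⟩
  refine Submodule.span_induction₂
    (p := fun x y _ _ => x * y ∈ Submodule.span ℤ_[p]
      (Set.range fun k : ℕ =>
        ((Nat.factorial (k / p ^ m) : ℚ_[p]) / (Nat.factorial k : ℚ_[p])) •
          descPochhammer ℚ_[p] k))
    ?_ ?_ ?_ ?_ ?_ ?_ ?_ hx hy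
  · rintro u w ⟨i, rfl⟩ ⟨j, rfl⟩
    exact gen_mul_mem p m i j
  · intro y _; rw [zero_mul]; exact Submodule.zero_mem _
  · intro x _; rw [mul_zero]; exact Submodule.zero_mem _
  · intro a b c _ _ _ h1 h2; rw [add_mul]; exact Submodule.add_mem _ h1 h2
  · intro a b c _ _ _ h1 h2; rw [mul_add]; exact Submodule.add_mem _ h1 h2
  · intro r a b _ _ h; rw [smul_mul_assoc]; exact Submodule.smul_mem _ _ h
  · intro r a b _ _ h; rw [mul_smul_comm]; exact Submodule.smul_mem _ _ h
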